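/- (Lemma A.1, 2-approximation for the splittable case.) There exists a splittable schedule whose makespan is at most max_i s_i + N/m, and hence at most 2·max{ N/m, max_i s_i }. Since every splittable schedule has makespan at least max{ N/m, max_i s_i }, this constitutes a factor-2 approximation of the optimal splittable makespan. -/

import Mathlib

open Classical Finset

/-- A splittable schedule: each job `j` is split into nonnegative fractions `x j u` on the
machines `u`, summing to the processing time `t j`. -/
structure SplitSchedule {υ ι : Type*} [Fintype υ] (t : ι → ℝ) where
  x : ι → υ → ℝ
  nonneg : ∀ j u, 0 ≤ x j u
  sum_eq : ∀ j, (∑ u, x j u) = t j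

/-- The load of machine `u` in a splittable schedule: total processing time placed on `u`
plus one setup time for each class having positive load on `u`. -/
noncomputable def spLoad {υ γ ι : Type*} [Fintype υ] [Fintype γ] [Fintype ι]
    (cl : ι → γ) (t : ι → ℝ) (s : γ → ℝ) (σ : SplitSchedule (υ := υ) t) (u : υ) : ℝ :=
  (∑ j, σ.x j u) +
  (∑ i ∈ univ.filter (fun i => ∃ j, cl j = i ∧ 0 < σ.x j u), s i)

/-- The makespan of a splittable schedule: the maximum machine load. -/
noncomputable def spMakespan {υ γ ι : Type*} [Fintype υ] [Fintype γ] [Fintype ι]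
    [Nonempty υ] (cl : ι → γ) (t : ι → ℝ) (s : γ → ℝ) (σ : SplitSchedule (υ := υ) t) : ℝ :=
  univ.sup' univ_nonempty (spLoad cl t s σ)

lemma overlap_symm' (a b p q : ℝ) (hab : a ≤ b) (hpq : p ≤ q) :
    min (max b p) q - min (max a p) q = min (max q a) b - min (max p a) b := by
  simp only [min_def, max_def]
  split_ifs <;> linarith

lemma tele' {ι : Type*} [LinearOrder ι] (H : ℝ → ℝ) (t : ι → ℝ) (z : ℝ) (F : Finset ι) :
    ∑ j ∈ F, (H (z + ∑ j' ∈ F.filter (· < j), t j' + t j)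
      - H (z + ∑ j' ∈ F.filter (· < j), t j'))
    = H (z + ∑ j ∈ F, t j) - H z := by
  classical
  induction F using Finset.induction_on_max with
  | empty => simp
  | insert a s ha ih =>
    have hnot : a ∉ s := fun h => lt_irrefl a (ha a h)
    have h1 : (insert a s).filter (· < a) = s := by
      ext x
      simp only [Finset.mem_filter, Finset.mem_insert]
      constructor
      · rintro ⟨h | h, hlt⟩
        · exact absurd hlt (by simp [h])
        · exact h
      · intro h; exact ⟨Or.inr h, ha x h⟩
    have h2 : ∀ j ∈ s, (insert a s).filter (· < j) = s.filter (· < j) := by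
      intro j hj
      ext x
      simp only [Finset.mem_filter, Finset.mem_insert]
      constructor
      · rintro ⟨h | h, hlt⟩
        · exact absurd (hlt.trans (ha j hj)) (by simp [h])
        · exact ⟨h, hlt⟩
      · rintro ⟨h, hlt⟩; exact ⟨Or.inr h, hlt⟩
    have key : ∑ j ∈ s, (H (z + ∑ j' ∈ (insert a s).filter (· < j), t j' + t j)
          - H (z + ∑ j' ∈ (insert a s).filter (· < j), t j'))
        = ∑ j ∈ s, (H (z + ∑ j' ∈ s.filter (· < j), t j' + t j)
          - H (z + ∑ j' ∈ s.filter (· < j), t j')) :=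
      Finset.sum_congr rfl (fun j hj => by rw [h2 j hj])
    have hsum : ∑ j ∈ insert a s, t j = t a + ∑ j ∈ s, t j := Finset.sum_insert hnot
    rw [Finset.sum_insert hnot, h1, key, ih, hsum,
      show z + (t a + ∑ j ∈ s, t j) = z + ∑ j ∈ s, t j + t a from by ring]
    ring

/-- Lemma A.1, 2-approximation for the splittable case: there is a splittable schedule
with makespan at most `max_i s_i + N/m`, hence at most `2·max{N/m, max_i s_i}`. -/
theorem sp_two_approximation {υ γ ι : Type*} [Fintype υ] [Fintype γ] [Fintype ι]
    [Nonempty υ] [Nonempty γ]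
    (cl : ι → γ) (t : ι → ℝ) (s : γ → ℝ)
    (ht : ∀ j, 0 < t j) (hs : ∀ i, 0 < s i)
    (hcl : ∀ i : γ, ∃ j, cl j = i) :
    ∃ σ : SplitSchedule (υ := υ) t,
      spMakespan cl t s σ ≤ (univ.sup' univ_nonempty s) +
        ((∑ i, s i) + (∑ j, t j)) / (Fintype.card υ : ℝ) ∧
      spMakespan cl t s σ ≤ 2 * max (((∑ i, s i) + (∑ j, t j)) / (Fintype.card υ : ℝ))
        (univ.sup' univ_nonempty s) := by
  classical
  set m := Fintype.card υ with hmdef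
  have hm0 : 0 < m := Fintype.card_pos
  have hmR : (0:ℝ) < (m:ℝ) := by exact_mod_cast hm0
  set eυ : υ ≃ Fin m := Fintype.equivFin υ with heυ
  letI : LinearOrder ι := LinearOrder.lift' (Fintype.equivFin ι) (Fintype.equivFin ι).injective
  letI : LinearOrder γ := LinearOrder.lift' (Fintype.equivFin γ) (Fintype.equivFin γ).injective
  set S := ∑ i, s i with hS
  set Tt := ∑ j, t j with hT
  set MS := univ.sup' univ_nonempty s with hMSdef
  set NN : ℝ := S + Tt with hNN
  set L : ℝ := NN / m with hL
  set Ti : γ → ℝ := fun i => ∑ j ∈ univ.filter (fun j => cl j = i), t j with hTi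
  set len : γ → ℝ := fun i => s i + Ti i with hlen
  set A : γ → ℝ := fun i => ∑ k ∈ univ.filter (fun k => k < i), len k with hA
  set a : ι → ℝ := fun j => A (cl j) + s (cl j)
    + ∑ j' ∈ (univ.filter (fun j' => cl j' = cl j)).filter (· < j), t j' with ha
  set b : ι → ℝ := fun j => a j + t j with hb
  set p : υ → ℝ := fun u => ((eυ u : ℕ) : ℝ) * L with hp
  set q : υ → ℝ := fun u => (((eυ u : ℕ) : ℝ) + 1) * L with hq
  set H : υ → ℝ → ℝ := fun u c => min (max c (p u)) (q u) with hHd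
  -- basic facts
  have hTi0 : ∀ i, 0 ≤ Ti i := fun i => Finset.sum_nonneg fun j _ => (ht j).le
  have hlen0 : ∀ i, 0 ≤ len i := fun i => by
    have := hs i; have := hTi0 i; simp only [hlen]; linarith
  have hfib : ∑ i, Ti i = Tt := Finset.sum_fiberwise univ cl t
  have hNlen : ∑ i, len i = NN := by
    simp only [hlen, Finset.sum_add_distrib, hfib, hNN, hS]
  have hA0 : ∀ i, 0 ≤ A i := fun i => Finset.sum_nonneg fun k _ => hlen0 k
  have hAins : ∀ i : γ, A i + len i = ∑ k ∈ insert i (univ.filter (fun k => k < i)), len k := by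
    intro i
    rw [Finset.sum_insert (by simp only [Finset.mem_filter, Finset.mem_univ, true_and]; exact lt_irrefl i)]
    simp only [hA]; ring
  have hAlen : ∀ i, A i + len i ≤ NN := by
    intro i
    rw [hAins i, ← hNlen]
    exact Finset.sum_le_sum_of_subset_of_nonneg (Finset.subset_univ _) fun k _ _ => hlen0 k
  have hAB : ∀ i i' : γ, i < i' → A i + len i ≤ A i' := by
    intro i i' hii
    rw [hAins i]
    apply Finset.sum_le_sum_of_subset_of_nonneg _ fun k _ _ => hlen0 k
    intro k hk
    simp only [Finset.mem_insert, Finset.mem_filter, Finset.mem_univ, true_and] at hk ⊢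
    rcases hk with h | hlt
    · exact h ▸ hii
    · exact hlt.trans hii
  have ha0 : ∀ j, 0 ≤ a j := by
    intro j
    have h1 := hA0 (cl j); have h2 := (hs (cl j)).le
    have h3 : (0:ℝ) ≤ ∑ j' ∈ (univ.filter (fun j' => cl j' = cl j)).filter (· < j), t j' :=
      Finset.sum_nonneg fun j' _ => (ht j').le
    simp only [ha]; linarith
  have hab : ∀ j, a j ≤ b j := fun j => by simp only [hb]; linarith [ht j]
  have hajlb : ∀ j, A (cl j) + s (cl j) ≤ a j := by
    intro j
    have h3 : (0:ℝ) ≤ ∑ j' ∈ (univ.filter (fun j' => cl j' = cl j)).filter (· < j), t j' :=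
      Finset.sum_nonneg fun j' _ => (ht j').le
    simp only [ha]; linarith
  have hbub : ∀ j, b j ≤ A (cl j) + s (cl j) + Ti (cl j) := by
    intro j
    have hsub : insert j ((univ.filter (fun j' => cl j' = cl j)).filter (· < j))
        ⊆ univ.filter (fun j' => cl j' = cl j) := by
      intro k hk
      simp only [Finset.mem_insert, Finset.mem_filter, Finset.mem_univ, true_and] at hk ⊢
      rcases hk with h | ⟨h, _⟩
      · rw [h]
      · exact h
    have hnotmem : j ∉ (univ.filter (fun j' => cl j' = cl j)).filter (· < j) := by
      simp
    have : ∑ j' ∈ (univ.filter (fun j' => cl j' = cl j)).filter (· < j), t j' + t j ≤ Ti (cl j) := by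
      rw [show ∑ j' ∈ (univ.filter (fun j' => cl j' = cl j)).filter (· < j), t j' + t j
          = ∑ j' ∈ insert j ((univ.filter (fun j' => cl j' = cl j)).filter (· < j)), t j' from by
        rw [Finset.sum_insert hnotmem]; ring, hTi]
      exact Finset.sum_le_sum_of_subset_of_nonneg hsub fun k _ _ => (ht k).le
    simp only [hb, ha]; linarith
  have hbN : ∀ j, b j ≤ NN := by
    intro j
    have h1 := hbub j
    have h2 := hAlen (cl j)
    simp only [hlen] at h2; linarith
  have hNN0 : 0 ≤ NN := by
    have h1 : 0 ≤ S := Finset.sum_nonneg fun i _ => (hs i).le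
    have h2 : 0 ≤ Tt := Finset.sum_nonneg fun j _ => (ht j).le
    simp only [hNN]; linarith
  have hL0 : 0 ≤ L := div_nonneg hNN0 hmR.le
  have hmL : (m:ℝ) * L = NN := by
    rw [hL]; field_simp
  have hpq : ∀ u, p u ≤ q u := fun u => by
    simp only [hp, hq]
    nlinarith [hL0]
  have hp0 : ∀ u, 0 ≤ p u := fun u => mul_nonneg (by positivity) hL0
  have hqN : ∀ u, q u ≤ NN := by
    intro u
    rw [← hmL]
    have h2 : ((eυ u : ℕ) : ℝ) + 1 ≤ (m : ℝ) := by
      have := (eυ u).is_lt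
      exact_mod_cast Nat.succ_le_of_lt this
    simp only [hq]
    exact mul_le_mul_of_nonneg_right h2 hL0
  have hHmono : ∀ u, Monotone (H u) := by
    intro u c c' hcc
    simp only [hHd]
    exact min_le_min (max_le_max hcc le_rfl) le_rfl
  have hHle : ∀ u c, H u c ≤ q u := fun u c => min_le_right _ _
  have hHge : ∀ u c, p u ≤ H u c := fun u c => le_min (le_max_right _ _) (hpq u)
  -- the schedule
  have hnonneg : ∀ (j : ι) (u : υ), 0 ≤ H u (b j) - H u (a j) :=
    fun j u => sub_nonneg.2 (hHmono u (hab j))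
  have hsum_eq : ∀ j : ι, (∑ u, (H u (b j) - H u (a j))) = t j := by
    intro j
    have step1 : ∑ u : υ, (H u (b j) - H u (a j))
        = ∑ v : Fin m, (H (eυ.symm v) (b j) - H (eυ.symm v) (a j)) :=
      (Equiv.sum_comp eυ.symm (fun u => H u (b j) - H u (a j))).symm
    have step2 : ∀ v : Fin m, H (eυ.symm v) (b j) - H (eυ.symm v) (a j)
        = min (max ((((v:ℕ):ℝ)+1) * L) (a j)) (b j)
          - min (max (((v:ℕ):ℝ) * L) (a j)) (b j) := by
      intro v
      simp only [hHd, hp, hq, Equiv.apply_symm_apply]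
      exact overlap_symm' (a j) (b j) (((v:ℕ):ℝ) * L) ((((v:ℕ):ℝ)+1) * L) (hab j)
        (by nlinarith [hL0])
    rw [step1, Finset.sum_congr rfl (fun v _ => step2 v)]
    have cast1 : ∀ v : Fin m, min (max ((((v:ℕ):ℝ)+1) * L) (a j)) (b j)
          - min (max (((v:ℕ):ℝ) * L) (a j)) (b j)
        = (fun w : ℕ => min (max (((w+1:ℕ):ℝ) * L) (a j)) (b j)
            - min (max (((w:ℕ):ℝ) * L) (a j)) (b j)) (v : ℕ) := by
      intro v; push_cast; ring_nf
    rw [Finset.sum_congr rfl (fun v _ => cast1 v),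
      Fin.sum_univ_eq_sum_range (fun w : ℕ => min (max (((w+1:ℕ):ℝ) * L) (a j)) (b j)
        - min (max (((w:ℕ):ℝ) * L) (a j)) (b j)) m,
      Finset.sum_range_sub (fun w : ℕ => min (max (((w:ℕ):ℝ) * L) (a j)) (b j)) m]
    have hGm : min (max (((m:ℕ):ℝ) * L) (a j)) (b j) = b j := by
      rw [hmL, max_eq_left ((hab j).trans (hbN j)), min_eq_right (hbN j)]
    have hG0 : min (max (((0:ℕ):ℝ) * L) (a j)) (b j) = a j := by
      norm_num
      rw [max_eq_right (ha0 j), min_eq_left (hab j)]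
    rw [hGm, hG0]
    simp only [hb]; ring
  set σ : SplitSchedule (υ := υ) t :=
    ⟨fun j u => H u (b j) - H u (a j), hnonneg, hsum_eq⟩ with hσ
  -- load computations
  have class_sum : ∀ (u : υ) (i : γ),
      ∑ j ∈ univ.filter (fun j => cl j = i), (H u (b j) - H u (a j))
      = H u (A i + s i + Ti i) - H u (A i + s i) := by
    intro u i
    have ht' := tele' (H u) t (A i + s i) (univ.filter (fun j => cl j = i))
    rw [show A i + s i + ∑ j ∈ univ.filter (fun j => cl j = i), t j
        = A i + s i + Ti i from by simp only [hTi]] at ht'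
    rw [← ht']
    refine Finset.sum_congr rfl fun j hj => ?_
    have hji : cl j = i := (Finset.mem_filter.1 hj).2
    simp only [hb, ha, hji]
  have sum_x : ∀ u, ∑ j, (H u (b j) - H u (a j))
      = ∑ i : γ, (H u (A i + s i + Ti i) - H u (A i + s i)) := by
    intro u
    rw [← Finset.sum_fiberwise univ cl (fun j => H u (b j) - H u (a j))]
    exact Finset.sum_congr rfl fun i _ => class_sum u i
  have block_sum : ∀ u, ∑ i : γ, (H u (A i + s i + Ti i) - H u (A i)) = L := by
    intro u
    have ht' := tele' (H u) len 0 (univ : Finset γ)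
    simp only [zero_add] at ht'
    rw [hNlen] at ht'
    have hHN : H u NN = q u := by
      simp only [hHd]
      rw [max_eq_left ((hpq u).trans (hqN u)), min_eq_right (hqN u)]
    have hH0 : H u 0 = p u := by
      simp only [hHd]
      rw [max_eq_right (hp0 u), min_eq_left (hpq u)]
    calc ∑ i : γ, (H u (A i + s i + Ti i) - H u (A i))
        = ∑ i : γ, (H u ((∑ k ∈ univ.filter (fun k => k < i), len k) + len i)
            - H u (∑ k ∈ univ.filter (fun k => k < i), len k)) := by
          refine Finset.sum_congr rfl fun i _ => ?_
          rw [show (∑ k ∈ univ.filter (fun k => k < i), len k) + len i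
              = A i + s i + Ti i from by simp only [hA, hlen]; ring,
            show (∑ k ∈ univ.filter (fun k => k < i), len k) = A i from by simp only [hA]]
      _ = H u NN - H u 0 := ht'
      _ = q u - p u := by rw [hHN, hH0]
      _ = L := by simp only [hp, hq]; ring
  have hload : ∀ u, spLoad cl t s σ u ≤ MS + L := by
    intro u
    have hMSs : ∀ i, s i ≤ MS := fun i => Finset.le_sup' s (Finset.mem_univ i)
    have hMS0 : 0 ≤ MS := le_trans (hs (Classical.arbitrary γ)).le (hMSs _)
    have main : ∀ P : Finset γ, (∀ i ∈ P, ∃ j, cl j = i ∧ 0 < H u (b j) - H u (a j)) →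
        (∑ j, (H u (b j) - H u (a j))) + ∑ i ∈ P, s i ≤ MS + L := by
      intro P hPmem
      set d : γ → ℝ := fun i => H u (A i + s i) - H u (A i) with hd
      set D : γ → ℝ := fun i => H u (A i + s i + Ti i) - H u (A i + s i) with hD
      have hd0 : ∀ i, 0 ≤ d i := fun i =>
        sub_nonneg.2 (hHmono u (by linarith [hs i]))
      have hsumD : ∑ i : γ, D i = L - ∑ i : γ, d i := by
        have h1 : ∑ i : γ, (D i + d i) = L := by
          rw [Finset.sum_congr rfl (fun i (_ : i ∈ univ) =>
            show D i + d i = H u (A i + s i + Ti i) - H u (A i) from by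
              simp only [hD, hd]; ring)]
          exact block_sum u
        rw [Finset.sum_add_distrib] at h1
        linarith
      have hPD : ∀ i ∈ P, 0 < D i := by
        intro i hi
        obtain ⟨j, hji, hxj⟩ := hPmem i hi
        have hup : H u (b j) ≤ H u (A i + s i + Ti i) :=
          hHmono u (by rw [← hji]; exact hbub j)
        have hlo : H u (A i + s i) ≤ H u (a j) :=
          hHmono u (by rw [← hji]; exact hajlb j)
        simp only [hD]; linarith
      have hPq : ∀ i ∈ P, A i + s i < q u := by
        intro i hi
        by_contra hcon
        push_neg at hcon
        have heq : H u (A i + s i) = q u := by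
          simp only [hHd]
          exact min_eq_right (hcon.trans (le_max_left _ _))
        have hD' := hPD i hi
        have h2 := hHle u (A i + s i + Ti i)
        simp only [hD] at hD'; linarith
      have hPp : ∀ i ∈ P, p u < A i + s i + Ti i := by
        intro i hi
        by_contra hcon
        push_neg at hcon
        have heq : H u (A i + s i + Ti i) = p u := by
          simp only [hHd]
          rw [max_eq_right hcon, min_eq_left (hpq u)]
        have hD' := hPD i hi
        have h2 := hHge u (A i + s i)
        simp only [hD] at hD'; linarith
      have hzero : ∀ i ∈ P, p u ≤ A i → s i - d i = 0 := by
        intro i hi hpA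
        have h1 : A i + s i < q u := hPq i hi
        have hHA : H u (A i) = A i := by
          simp only [hHd]
          rw [max_eq_left hpA, min_eq_left (by linarith [hs i])]
        have hHAs : H u (A i + s i) = A i + s i := by
          simp only [hHd]
          rw [max_eq_left (by linarith [hs i]), min_eq_left (by linarith)]
        simp only [hd]; rw [hHA, hHAs]; ring
      set Pb := P.filter (fun i => A i < p u) with hPb
      have hPsub : Pb ⊆ P := Finset.filter_subset _ _
      have hsum_split : ∑ i ∈ P, (s i - d i) = ∑ i ∈ Pb, (s i - d i) := by
        symm
        apply Finset.sum_subset hPsub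
        intro i hi hni
        have hnl : ¬ A i < p u := fun hlt => hni (Finset.mem_filter.2 ⟨hi, hlt⟩)
        exact hzero i hi (not_lt.1 hnl)
      have hcard : Pb.card ≤ 1 := by
        rw [Finset.card_le_one]
        intro i hi i' hi'
        have hi1 := Finset.mem_filter.1 hi
        have hi1' := Finset.mem_filter.1 hi'
        by_contra hne
        have hB := hPp i hi1.1
        have hB' := hPp i' hi1'.1
        rcases lt_trichotomy i i' with hlt | heq | hlt
        · have hab' := hAB i i' hlt
          have hli : A i + len i = A i + s i + Ti i := by simp only [hlen]; ring
          linarith [hi1'.2]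
        · exact hne heq
        · have hab' := hAB i' i hlt
          have hli : A i' + len i' = A i' + s i' + Ti i' := by simp only [hlen]; ring
          linarith [hi1.2]
      have hbad : ∑ i ∈ Pb, (s i - d i) ≤ MS := by
        rcases Finset.eq_empty_or_nonempty Pb with he | hne
        · rw [he]; simpa using hMS0
        · obtain ⟨i1, hi1⟩ := hne
          have h1 : Pb = {i1} := by
            apply Finset.eq_singleton_iff_unique_mem.2
            exact ⟨hi1, fun x hx => Finset.card_le_one.1 hcard x hx i1 hi1⟩
          rw [h1, Finset.sum_singleton]
          linarith [hd0 i1, hMSs i1]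
      have hPdsum : ∑ i ∈ P, d i ≤ ∑ i : γ, d i :=
        Finset.sum_le_sum_of_subset_of_nonneg (Finset.subset_univ _) fun i _ _ => hd0 i
      have hPsd : ∑ i ∈ P, s i - ∑ i ∈ P, d i = ∑ i ∈ P, (s i - d i) :=
        (Finset.sum_sub_distrib _ _).symm
      have hkey : ∑ i ∈ P, s i - ∑ i : γ, d i ≤ MS := by
        rw [hsum_split] at hPsd
        linarith
      rw [sum_x u, hsumD]
      linarith
    unfold spLoad
    rw [show (∑ j, σ.x j u) = ∑ j, (H u (b j) - H u (a j)) from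
      Finset.sum_congr rfl fun j _ => rfl]
    apply main
    intro i hi
    rw [Finset.filter_congr_decidable] at hi
    exact (Finset.mem_filter.1 hi).2
  refine ⟨σ, ?_, ?_⟩
  · unfold spMakespan
    exact Finset.sup'_le _ _ fun u _ => hload u
  · unfold spMakespan
    refine le_trans (Finset.sup'_le _ _ fun u _ => hload u) ?_
    have h1 := le_max_left L MS
    have h2 := le_max_right L MS
    linarith
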